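/- Let c > 3, t > 0 and τ ∈ (0,1]. There exists a constant C > 0, depending only on c, t and τ, such that for all s ≥ 1, ∫_{√2·t·s}^{∞} ( max( s^τ, R − √2·t·s ) )^{1−c} · R dR ≤ C ( s^{−τ(c−3)} + s^{1−τ(c−2)} ). -/

import Mathlib

open MeasureTheory Set Real
open scoped ENNReal

private lemma lint_rpow_Ioi {p d : ℝ} (hp : p < -1) (hd : 0 < d) :
    ∫⁻ u in Set.Ioi d, ENNReal.ofReal (u ^ p) = ENNReal.ofReal (d ^ (p + 1) / (-(p + 1))) := by
  rw [← ofReal_integral_eq_lintegral_ofReal (integrableOn_Ioi_rpow_of_lt hp hd)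
      (((ae_restrict_iff' measurableSet_Ioi).mpr (Filter.Eventually.of_forall
        fun u hu => Real.rpow_nonneg (le_of_lt (hd.trans hu)) p)))]
  rw [integral_Ioi_rpow_of_lt hp hd]
  congr 1
  rw [div_neg, neg_div]

/-- For `c > 3`, `t > 0`, `τ ∈ (0,1]`, there is a constant `C > 0`
such that for all `s ≥ 1`,
`∫_{√2·t·s}^{∞} (max(s^τ, R − √2·t·s))^{1−c} · R dR ≤ C (s^{−τ(c−3)} + s^{1−τ(c−2)})`. -/
theorem stmt4 (c t τ : ℝ) (hc : 3 < c) (ht : 0 < t) (hτ : τ ∈ Set.Ioc (0 : ℝ) 1) :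
    ∃ C : ℝ, 0 < C ∧ ∀ s : ℝ, 1 ≤ s →
      ∫⁻ R in Set.Ioi (Real.sqrt 2 * t * s),
          ENNReal.ofReal ((max (s ^ τ) (R - Real.sqrt 2 * t * s)) ^ (1 - c) * R) ≤
        ENNReal.ofReal (C * (s ^ (-(τ * (c - 3))) + s ^ (1 - τ * (c - 2)))) := by
  obtain ⟨hτ0, hτ1⟩ := hτ
  have h3 : (0:ℝ) < c - 3 := by linarith
  have h2 : (0:ℝ) < c - 2 := by linarith
  have hsq : (0:ℝ) < Real.sqrt 2 := Real.sqrt_pos.mpr (by norm_num)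
  refine ⟨(1 + 1/(c-3)) + Real.sqrt 2 * t * (1 + 1/(c-2)), by positivity, ?_⟩
  intro s hs
  have hs0 : (0:ℝ) < s := lt_of_lt_of_le one_pos hs
  set a : ℝ := Real.sqrt 2 * t * s with ha_def
  have ha : 0 < a := by positivity
  set d : ℝ := s ^ τ with hd_def
  have hd : 0 < d := Real.rpow_pos_of_pos hs0 τ
  set b : ℝ := a + d with hb_def
  have hab : a ≤ b := by linarith
  -- split the domain
  rw [← Set.Ioc_union_Ioi_eq_Ioi hab, lintegral_union measurableSet_Ioi Set.Ioc_disjoint_Ioi_same]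
  -- piece 1
  have h1 : ∫⁻ R in Set.Ioc a b, ENNReal.ofReal ((max d (R - a)) ^ (1 - c) * R)
      ≤ ENNReal.ofReal (d ^ (1 - c) * b * d) := by
    calc ∫⁻ R in Set.Ioc a b, ENNReal.ofReal ((max d (R - a)) ^ (1 - c) * R)
        ≤ ∫⁻ _ in Set.Ioc a b, ENNReal.ofReal (d ^ (1 - c) * b) := by
          refine setLIntegral_mono' measurableSet_Ioc fun R hR => ENNReal.ofReal_le_ofReal ?_
          have hmax : (max d (R - a)) ^ (1 - c) ≤ d ^ (1 - c) :=
            Real.rpow_le_rpow_of_nonpos hd (le_max_left _ _) (by linarith)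
          exact mul_le_mul hmax hR.2 (le_of_lt (ha.trans hR.1))
            (Real.rpow_nonneg hd.le _)
      _ = ENNReal.ofReal (d ^ (1 - c) * b) * volume (Set.Ioc a b) := setLIntegral_const _ _
      _ = ENNReal.ofReal (d ^ (1 - c) * b * d) := by
          rw [Real.volume_Ioc, ← ENNReal.ofReal_mul (by positivity)]
          congr 1
          rw [hb_def]; ring
  -- piece 2
  have hfm : Measurable fun u : ℝ => ENNReal.ofReal (u ^ (1 - c) * (u + a)) := by
    apply Measurable.ennreal_ofReal
    exact ((measurable_id'.pow measurable_const).mul (measurable_id.add_const a))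
  have h2eq : ∫⁻ R in Set.Ioi b, ENNReal.ofReal ((max d (R - a)) ^ (1 - c) * R)
      = ∫⁻ u in Set.Ioi d, ENNReal.ofReal (u ^ (1 - c) * (u + a)) := by
    have hcongr : ∫⁻ R in Set.Ioi b, ENNReal.ofReal ((max d (R - a)) ^ (1 - c) * R)
        = ∫⁻ R in Set.Ioi b, ENNReal.ofReal ((R - a) ^ (1 - c) * ((R - a) + a)) := by
      refine setLIntegral_congr_fun measurableSet_Ioi (
        fun R hR => ?_)
      have hRb : b < R := hR
      rw [max_eq_right (by rw [hb_def] at hRb; linarith), sub_add_cancel]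
    rw [hcongr]
    have hpre : (fun x : ℝ => x - a) ⁻¹' Set.Ioi d = Set.Ioi b := by
      ext x
      simp only [Set.mem_preimage, Set.mem_Ioi, lt_sub_iff_add_lt, hb_def]
      constructor <;> intro h <;> linarith
    rw [← hpre]
    exact (measurePreserving_sub_right volume a).setLIntegral_comp_preimage
      measurableSet_Ioi hfm
  have hsplit2 : ∫⁻ u in Set.Ioi d, ENNReal.ofReal (u ^ (1 - c) * (u + a))
      = (∫⁻ u in Set.Ioi d, ENNReal.ofReal (u ^ (2 - c)))
        + ENNReal.ofReal a * ∫⁻ u in Set.Ioi d, ENNReal.ofReal (u ^ (1 - c)) := by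
    have : ∫⁻ u in Set.Ioi d, ENNReal.ofReal (u ^ (1 - c) * (u + a))
        = ∫⁻ u in Set.Ioi d,
            (ENNReal.ofReal (u ^ (2 - c)) + ENNReal.ofReal a * ENNReal.ofReal (u ^ (1 - c))) := by
      refine setLIntegral_congr_fun measurableSet_Ioi (
        fun u hu => ?_)
      have hu0 : 0 < u := hd.trans hu
      have e1 : u ^ (1 - c) * (u + a) = u ^ (2 - c) + a * u ^ (1 - c) := by
        have h21 : u ^ (2 - c) = u ^ (1 - c) * u := by
          rw [show (2 - c) = (1 - c) + 1 by ring, Real.rpow_add hu0, Real.rpow_one]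
        rw [mul_add, ← h21]; ring
      rw [e1, ENNReal.ofReal_add (Real.rpow_nonneg hu0.le _) (by positivity),
        ENNReal.ofReal_mul ha.le]
    rw [this, lintegral_add_left ((measurable_id'.pow measurable_const).ennreal_ofReal) ,
      lintegral_const_mul' _ _ ENNReal.ofReal_ne_top]
  have k1 : ∫⁻ u in Set.Ioi d, ENNReal.ofReal (u ^ (2 - c))
      = ENNReal.ofReal (d ^ (3 - c) / (c - 3)) := by
    rw [lint_rpow_Ioi (by linarith : (2:ℝ) - c < -1) hd,
      show (2 - c + 1) = 3 - c from by ring, show -(3 - c) = c - 3 from by ring]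
  have k2 : ∫⁻ u in Set.Ioi d, ENNReal.ofReal (u ^ (1 - c))
      = ENNReal.ofReal (d ^ (2 - c) / (c - 2)) := by
    rw [lint_rpow_Ioi (by linarith : (1:ℝ) - c < -1) hd,
      show (1 - c + 1) = 2 - c from by ring, show -(2 - c) = c - 2 from by ring]
  -- combine
  calc (∫⁻ R in Set.Ioc a b, ENNReal.ofReal ((max d (R - a)) ^ (1 - c) * R))
        + ∫⁻ R in Set.Ioi b, ENNReal.ofReal ((max d (R - a)) ^ (1 - c) * R)
      ≤ ENNReal.ofReal (d ^ (1 - c) * b * d)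
        + (ENNReal.ofReal (d ^ (3 - c) / (c - 3))
          + ENNReal.ofReal a * ENNReal.ofReal (d ^ (2 - c) / (c - 2))) := by
        rw [h2eq, hsplit2, k1, k2]
        exact add_le_add_left h1 _
    _ = ENNReal.ofReal (d ^ (1 - c) * b * d
          + (d ^ (3 - c) / (c - 3) + a * (d ^ (2 - c) / (c - 2)))) := by
        rw [← ENNReal.ofReal_mul ha.le, ← ENNReal.ofReal_add (by positivity) (by positivity),
          ← ENNReal.ofReal_add (by positivity) (by positivity)]
    _ ≤ ENNReal.ofReal (((1 + 1/(c-3)) + Real.sqrt 2 * t * (1 + 1/(c-2)))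
          * (s ^ (-(τ * (c - 3))) + s ^ (1 - τ * (c - 2)))) := by
        refine ENNReal.ofReal_le_ofReal ?_
        have hdx : ∀ x : ℝ, d ^ x = s ^ (τ * x) := fun x => by
          rw [hd_def, ← Real.rpow_mul hs0.le]
        have hA : 0 ≤ s ^ (-(τ * (c - 3))) := Real.rpow_nonneg hs0.le _
        have hB : 0 ≤ s ^ (1 - τ * (c - 2)) := Real.rpow_nonneg hs0.le _
        have rad : ∀ x y : ℝ, s ^ (x + y) = s ^ x * s ^ y := Real.rpow_add hs0
        have r1 : ∀ x : ℝ, s ^ (x + 1) = s ^ x * s := fun x => Real.rpow_add_one hs0.ne' x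
        have e1 : d ^ (1 - c) * b * d
            = Real.sqrt 2 * t * s ^ (1 - τ * (c - 2)) + s ^ (-(τ * (c - 3))) := by
          rw [hb_def, ha_def, hdx, hd_def,
            show (1 - τ * (c - 2)) = (τ * (1 - c) + τ) + 1 by ring,
            show (-(τ * (c - 3))) = (τ * (1 - c) + τ) + τ by ring, r1 (τ * (1 - c) + τ),
            rad (τ * (1 - c) + τ) τ, rad (τ * (1 - c)) τ]
          ring
        have e2 : d ^ (3 - c) / (c - 3) = s ^ (-(τ * (c - 3))) * (1 / (c - 3)) := by
          rw [hdx, div_eq_mul_one_div]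
          congr 2
          ring
        have e3 : a * (d ^ (2 - c) / (c - 2))
            = Real.sqrt 2 * t * (1 / (c - 2)) * s ^ (1 - τ * (c - 2)) := by
          rw [hdx, ha_def, show (1 - τ * (c - 2)) = τ * (2 - c) + 1 by ring, r1]
          ring
        rw [e1, e2, e3]
        have hst : 0 ≤ Real.sqrt 2 * t := by positivity
        have h13 : 0 < 1 / (c - 3) := by positivity
        have h12 : 0 < 1 / (c - 2) := by positivity
        nlinarith [mul_nonneg hst hA, mul_nonneg hst hB, mul_nonneg (mul_nonneg hst h12.le) hA,
          mul_nonneg h13.le hB]
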